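/- Let B be an infinite set of positive integers. Then the interior of the window W in H is empty if and only if the subshift (X_η, σ) is proximal, i.e., for every pair x, y ∈ X_η and every ε > 0 (with respect to a compatible metric on {0,1}^ℤ) there exists n ∈ ℤ with dist(σⁿx, σⁿy) < ε. -/
import Mathlib


open Set MeasureTheory Filter Topology

namespace BFree

/-- The ambient compact group `∏_{b ∈ B} ℤ/bℤ`. -/
abbrev Gspace (B : Set ℕ+) : Type := ∀ b : B, ZMod ((b : ℕ+) : ℕ)

/-- The diagonal embedding `Δ : ℤ → ∏_{b ∈ B} ℤ/bℤ`. -/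
def delta (B : Set ℕ+) : ℤ →+ Gspace B where
  toFun n := fun b => (n : ZMod ((b : ℕ+) : ℕ))
  map_zero' := by funext b; simp
  map_add' m n := by funext b; simp

/-- `H`, the closure of `Δ(ℤ)`, as a (closed) subgroup of `Gspace B`. -/
def Hgrp (B : Set ℕ+) : AddSubgroup (Gspace B) :=
  (delta B).range.topologicalClosure

/-- `H` as a compact topological group. -/
abbrev Hspace (B : Set ℕ+) : Type := ↥(Hgrp B)

instance (B : Set ℕ+) : CompactSpace (Hspace B) :=
  isCompact_iff_compactSpace.mp
    (IsClosed.isCompact (AddSubgroup.isClosed_topologicalClosure _))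

instance (B : Set ℕ+) : BorelSpace (Hspace B) := Subtype.borelSpace _

/-- The window `W = {h ∈ H : h_b ≠ 0 for all b ∈ B}`. -/
def window (B : Set ℕ+) : Set (Hspace B) :=
  {h | ∀ b : B, (h : Gspace B) b ≠ 0}

/-- `Δ(n)` as an element of `H`. -/
def deltaH (B : Set ℕ+) (n : ℤ) : Hspace B :=
  ⟨delta B n, (delta B).range.le_topologicalClosure ⟨n, rfl⟩⟩

/-- The set of multiples `M_B ⊆ ℤ` of a set `B` of positive integers. -/
def MultSet (B : Set ℕ+) : Set ℤ := {n | ∃ b ∈ B, ((b : ℕ) : ℤ) ∣ n}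

/-- The `B`-free set `F_B = ℤ ∖ M_B`. -/
def FreeSet (B : Set ℕ+) : Set ℤ := {n | ∀ b ∈ B, ¬ ((b : ℕ) : ℤ) ∣ n}

/-- Set of multiples of a set of natural numbers. -/
def MultSetN (C : Set ℕ) : Set ℤ := {n | ∃ c ∈ C, (c : ℤ) ∣ n}

/-- Free set of a set of natural numbers. -/
def FreeSetN (C : Set ℕ) : Set ℤ := {n | ∀ c ∈ C, ¬ (c : ℤ) ∣ n}

/-- `#(M ∩ [1, N]) / N`. -/
noncomputable def densSeq (M : Set ℤ) (N : ℕ) : ℝ :=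
  (Nat.card ↥(M ∩ Set.Icc (1 : ℤ) (N : ℤ)) : ℝ) / N

/-- Lower (asymptotic) density of a set of integers. -/
noncomputable def lowerDensity (M : Set ℤ) : ℝ := Filter.liminf (densSeq M) Filter.atTop

/-- Upper (asymptotic) density of a set of integers. -/
noncomputable def upperDensity (M : Set ℤ) : ℝ := Filter.limsup (densSeq M) Filter.atTop

/-- `B` is taut if removing any element strictly decreases the lower density
of the set of multiples. -/
def Taut (B : Set ℕ+) : Prop :=
  ∀ b ∈ B, lowerDensity (MultSet (B \ {b})) < lowerDensity (MultSet B)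

/-- `B` is primitive if no element divides another. -/
def Primitive (B : Set ℕ+) : Prop :=
  ∀ b ∈ B, ∀ b' ∈ B, (b : ℕ) ∣ (b' : ℕ) → b = b'

/-- `lcm(S)` for a finite set of positive integers. -/
def lcmS (S : Finset ℕ+) : ℕ := S.lcm fun b => (b : ℕ)

/-- `A_S = {gcd(b, lcm S) : b ∈ B}`. -/
def ASet (B : Set ℕ+) (S : Finset ℕ+) : Set ℕ :=
  {m | ∃ b ∈ B, m = Nat.gcd (b : ℕ) (lcmS S)}

/-- The cylinder set `U_S(h) ⊆ H`. -/
def cyl (B : Set ℕ+) (S : Finset ℕ+) (hS : ↑S ⊆ B) (h : Hspace B) : Set (Hspace B) :=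
  {h' | ∀ b, ∀ hb : b ∈ S, (h' : Gspace B) ⟨b, hS hb⟩ = (h : Gspace B) ⟨b, hS hb⟩}

/-- `E = ⋃_{S ⊆ B finite} F_{A_S}`. -/
def Eset (B : Set ℕ+) : Set ℤ :=
  ⋃ (S : Finset ℕ+) (_ : ↑S ⊆ B), FreeSetN (ASet B S)

/-- `A_∞`. -/
def Ainfty (B : Set ℕ+) : Set ℕ :=
  {n | ∀ S : Finset ℕ+, ↑S ⊆ B →
    ∃ S' : Finset ℕ+, S ⊆ S' ∧ ↑S' ⊆ B ∧ n ∈ ASet B S' ∧ ∀ b ∈ S', (b : ℕ) ≠ n}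

/-- The indicator `η` of the `B`-free set, as a point of `{0,1}^ℤ`. -/
noncomputable def eta (B : Set ℕ+) : ℤ → Bool :=
  fun n => @decide (n ∈ FreeSet B) (Classical.propDecidable _)

/-- The left shift on `{0,1}^ℤ`, iterated `k` times (`k ∈ ℤ`). -/
def shift (k : ℤ) (x : ℤ → Bool) : ℤ → Bool := fun n => x (n + k)

/-- The orbit closure `X_η` of `η` in `{0,1}^ℤ`. -/
noncomputable def Xeta (B : Set ℕ+) : Set (ℤ → Bool) :=
  closure {x | ∃ k : ℤ, x = shift k (eta B)}


/-! ### Auxiliary material for Statement 8 -/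

/-- The key combinatorial condition: every finite subset of `B` can be extended by an
element of `B` coprime to its lcm. -/
def CoprimeExt (B : Set ℕ+) : Prop :=
  ∀ S : Finset ℕ+, ↑S ⊆ B → ∃ c ∈ B, Nat.gcd ((c : ℕ+) : ℕ) (lcmS S) = 1

lemma lcmS_ne_zero (S : Finset ℕ+) : lcmS S ≠ 0 := by
  simp [lcmS, Finset.lcm_eq_zero_iff]

lemma lcmS_dvd_of_subset {S S' : Finset ℕ+} (h : S ⊆ S') : lcmS S ∣ lcmS S' :=
  Finset.lcm_dvd fun b hb => Finset.dvd_lcm (h hb)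

lemma dvd_lcmS {S : Finset ℕ+} {b : ℕ+} (hb : b ∈ S) : (b : ℕ) ∣ lcmS S :=
  Finset.dvd_lcm hb

lemma eta_eq_false_iff {B : Set ℕ+} {n : ℤ} : eta B n = false ↔ n ∉ FreeSet B := by
  simp [eta]

lemma eta_eq_true_iff {B : Set ℕ+} {n : ℤ} : eta B n = true ↔ n ∈ FreeSet B := by
  simp [eta]

lemma gcd_eq_one_aux {c L : ℕ} {a : ℤ} (h1 : (c : ℤ) ∣ a) (h2 : (L : ℤ) ∣ a - 1) :
    Nat.gcd c L = 1 := by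
  have hd1 : ((Nat.gcd c L : ℕ) : ℤ) ∣ a :=
    dvd_trans (Int.natCast_dvd_natCast.mpr (Nat.gcd_dvd_left c L)) h1
  have hd2 : ((Nat.gcd c L : ℕ) : ℤ) ∣ a - 1 :=
    dvd_trans (Int.natCast_dvd_natCast.mpr (Nat.gcd_dvd_right c L)) h2
  have h3 : ((Nat.gcd c L : ℕ) : ℤ) ∣ 1 := by
    have := dvd_sub hd1 hd2; simpa using this
  exact Nat.dvd_one.mp (by exact_mod_cast h3)

/-- Every element of `H` is approximated by a `Δ(n)` on any finite set of coordinates. -/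
lemma exists_delta_mem {B : Set ℕ+} (h : Hspace B) (F : Finset ↥B) :
    ∃ n : ℤ, ∀ i ∈ F, delta B n i = (h : Gspace B) i := by
  have hcl : (h : Gspace B) ∈ closure ((delta B).range : Set (Gspace B)) := h.2
  have hU : IsOpen {g : Gspace B | ∀ i ∈ F, g i = (h : Gspace B) i} := by
    have he : {g : Gspace B | ∀ i ∈ F, g i = (h : Gspace B) i}
        = ⋂ i ∈ F, {g : Gspace B | g i = (h : Gspace B) i} := by
      ext g; simp
    rw [he]
    refine isOpen_biInter_finset fun i _ => ?_
    have he2 : {g : Gspace B | g i = (h : Gspace B) i}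
        = (fun g : Gspace B => g i) ⁻¹' {(h : Gspace B) i} := rfl
    rw [he2]
    exact IsOpen.preimage (continuous_apply i) (isOpen_discrete _)
  obtain ⟨g, hgo, hgr⟩ := mem_closure_iff.mp hcl _ hU (fun i _ => rfl)
  obtain ⟨n, rfl⟩ := hgr
  exact ⟨n, hgo⟩

/-- Every point of the orbit closure agrees with a shift of `η` on any finite window. -/
lemma exists_shift_agree {B : Set ℕ+} {x : ℤ → Bool} (hx : x ∈ Xeta B) (T : ℕ) :
    ∃ k : ℤ, ∀ n : ℤ, |n| ≤ (T : ℤ) → x n = eta B (n + k) := by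
  have hx' : x ∈ closure {z : ℤ → Bool | ∃ k : ℤ, z = shift k (eta B)} := hx
  have hU : IsOpen {z : ℤ → Bool | ∀ n ∈ Finset.Icc (-(T : ℤ)) (T : ℤ), z n = x n} := by
    have he : {z : ℤ → Bool | ∀ n ∈ Finset.Icc (-(T : ℤ)) (T : ℤ), z n = x n}
        = ⋂ n ∈ Finset.Icc (-(T : ℤ)) (T : ℤ), {z : ℤ → Bool | z n = x n} := by
      ext z; simp
    rw [he]
    refine isOpen_biInter_finset fun n _ => ?_
    have he2 : {z : ℤ → Bool | z n = x n} = (fun z : ℤ → Bool => z n) ⁻¹' {x n} := rfl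
    rw [he2]
    exact IsOpen.preimage (continuous_apply n) (isOpen_discrete _)
  obtain ⟨z, hzo, k, rfl⟩ := mem_closure_iff.mp hx' _ hU (fun n _ => rfl)
  refine ⟨k, fun n hn => ?_⟩
  have := hzo n (Finset.mem_Icc.mpr (abs_le.mp hn))
  exact this.symm

/-- Every point of `X_η` vanishes on a full residue class mod each `c ∈ B`. -/
lemma exists_residue {B : Set ℕ+} {x : ℤ → Bool} (hx : x ∈ Xeta B) {c : ℕ+} (hc : c ∈ B) :
    ∃ r : ℤ, ∀ n : ℤ, ((c : ℕ) : ℤ) ∣ n - r → x n = false := by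
  choose k hk using fun T : ℕ => exists_shift_agree hx T
  haveI : NeZero ((c : ℕ+) : ℕ) := ⟨c.ne_zero⟩
  obtain ⟨y, hy⟩ := Finite.exists_infinite_fiber
    (fun T : ℕ => ((-(k T) : ℤ) : ZMod ((c : ℕ+) : ℕ)))
  obtain ⟨r, rfl⟩ := ZMod.intCast_surjective y
  refine ⟨r, fun n hn => ?_⟩
  have hinf : {T : ℕ | ((-(k T) : ℤ) : ZMod ((c : ℕ+) : ℕ)) = (r : ZMod _)}.Infinite :=
    Set.infinite_coe_iff.mp hy
  obtain ⟨T, hT, hTn⟩ := hinf.exists_gt n.natAbs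
  have habs : |n| ≤ (T : ℤ) := by
    rw [Int.abs_eq_natAbs]; exact_mod_cast hTn.le
  have hkr : ((c : ℕ) : ℤ) ∣ -(k T) - r := Int.modEq_iff_dvd.mp
    (((ZMod.intCast_eq_intCast_iff _ _ _).mp hT).symm)
  have hdvd : ((c : ℕ) : ℤ) ∣ n + k T := by
    have := dvd_sub hn hkr
    have he : n - r - (-(k T) - r) = n + k T := by ring
    rwa [he] at this
  rw [hk T n habs]
  rw [eta_eq_false_iff]
  intro hfree
  exact hfree c hc hdvd

/-- The basic CRT extension step. -/
lemma crt_step {B : Set ℕ+} (hP : CoprimeExt B) {x : ℤ → Bool} (hx : x ∈ Xeta B)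
    (S : Finset ℕ+) (hS : ↑S ⊆ B) (k m : ℤ) :
    ∃ (S' : Finset ℕ+) (k' : ℤ), ↑S' ⊆ B ∧ S ⊆ S' ∧ ((lcmS S : ℕ) : ℤ) ∣ k' - k ∧
      ∀ t : ℤ, x (k' + t * ((lcmS S' : ℕ) : ℤ) + m) = false := by
  obtain ⟨c, hcB, hcop⟩ := hP S hS
  obtain ⟨r, hr⟩ := exists_residue hx hcB
  have hco : IsCoprime (((c : ℕ+) : ℕ) : ℤ) ((lcmS S : ℕ) : ℤ) := by
    rw [Int.isCoprime_iff_gcd_eq_one, Int.gcd_natCast_natCast]; exact hcop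
  obtain ⟨u, v, huv⟩ := hco
  refine ⟨insert c S, k + (v * (r - m - k)) * ((lcmS S : ℕ) : ℤ), ?_, Finset.subset_insert _ _,
    ⟨v * (r - m - k), by ring⟩, fun t => ?_⟩
  · intro b hb
    rcases Finset.mem_insert.mp (by exact_mod_cast hb) with rfl | hbS
    · exact hcB
    · exact hS hbS
  · apply hr
    have hcL' : (((c : ℕ+) : ℕ) : ℤ) ∣ ((lcmS (insert c S) : ℕ) : ℤ) :=
      Int.natCast_dvd_natCast.mpr (dvd_lcmS (Finset.mem_insert_self c S))
    have h1 : (((c : ℕ+) : ℕ) : ℤ) ∣ (k + (v * (r - m - k)) * ((lcmS S : ℕ) : ℤ)) + m - r := by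
      refine ⟨(r - m - k) * (-u), ?_⟩
      linear_combination (r - m - k) * huv
    have h2 : (((c : ℕ+) : ℕ) : ℤ) ∣ t * ((lcmS (insert c S) : ℕ) : ℤ) :=
      Dvd.dvd.mul_left hcL' t
    have he : (k + (v * (r - m - k)) * ((lcmS S : ℕ) : ℤ)) + t * ((lcmS (insert c S) : ℕ) : ℤ)
        + m - r
        = ((k + (v * (r - m - k)) * ((lcmS S : ℕ) : ℤ)) + m - r)
          + t * ((lcmS (insert c S) : ℕ) : ℤ) := by ring
    rw [he]
    exact dvd_add h1 h2

lemma shift_false {x : ℤ → Bool} {L a b m : ℤ} (h : ∀ t : ℤ, x (b + t * L + m) = false)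
    (h1 : L ∣ a - b) {L2 : ℤ} (h2 : L ∣ L2) (t2 : ℤ) : x (a + t2 * L2 + m) = false := by
  obtain ⟨s, hs⟩ := h1
  obtain ⟨w, hw⟩ := h2
  have ht := h (s + t2 * w)
  have he : a + t2 * L2 + m = b + (s + t2 * w) * L + m := by
    linear_combination hs + t2 * hw
  rw [he]
  exact ht

/-- The main consequence of `CoprimeExt`: any two points of `X_η` can be simultaneously
annihilated on any finite window by a common shift. -/
lemma key_annihilate {B : Set ℕ+} (hP : CoprimeExt B) {x y : ℤ → Bool}
    (hx : x ∈ Xeta B) (hy : y ∈ Xeta B) (N : ℕ) :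
    ∃ k : ℤ, ∀ m : ℤ, |m| ≤ (N : ℤ) → x (m + k) = false ∧ y (m + k) = false := by
  suffices h : ∀ F : Finset ℤ, ∃ (S : Finset ℕ+) (k : ℤ), ↑S ⊆ B ∧
      ∀ t : ℤ, ∀ m ∈ F, x (k + t * ((lcmS S : ℕ) : ℤ) + m) = false ∧
        y (k + t * ((lcmS S : ℕ) : ℤ) + m) = false by
    obtain ⟨S, k, _, hk⟩ := h (Finset.Icc (-(N : ℤ)) (N : ℤ))
    refine ⟨k, fun m hm => ?_⟩
    have h0 := hk 0 m (Finset.mem_Icc.mpr (abs_le.mp hm))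
    have he : k + 0 * ((lcmS S : ℕ) : ℤ) + m = m + k := by ring
    rw [he] at h0
    exact h0
  intro F
  induction F using Finset.induction_on with
  | empty => exact ⟨∅, 0, by simp, by simp⟩
  | @insert a F' _ ih =>
    obtain ⟨S, k, hSB, hk⟩ := ih
    obtain ⟨S₁, k₁, hS₁B, hSS₁, hd₁, hx₁⟩ := crt_step hP hx S hSB k a
    obtain ⟨S₂, k₂, hS₂B, hS₁S₂, hd₂, hy₂⟩ := crt_step hP hy S₁ hS₁B k₁ a
    have hL₁L₂ : ((lcmS S₁ : ℕ) : ℤ) ∣ ((lcmS S₂ : ℕ) : ℤ) :=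
      Int.natCast_dvd_natCast.mpr (lcmS_dvd_of_subset hS₁S₂)
    have hLL₁ : ((lcmS S : ℕ) : ℤ) ∣ ((lcmS S₁ : ℕ) : ℤ) :=
      Int.natCast_dvd_natCast.mpr (lcmS_dvd_of_subset hSS₁)
    have hLL₂ : ((lcmS S : ℕ) : ℤ) ∣ ((lcmS S₂ : ℕ) : ℤ) := hLL₁.trans hL₁L₂
    have hdk : ((lcmS S : ℕ) : ℤ) ∣ k₂ - k := by
      have h1 : ((lcmS S : ℕ) : ℤ) ∣ k₂ - k₁ := hLL₁.trans hd₂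
      have he : k₂ - k = (k₂ - k₁) + (k₁ - k) := by ring
      rw [he]; exact dvd_add h1 hd₁
    refine ⟨S₂, k₂, hS₂B, fun t m hm => ?_⟩
    rcases Finset.mem_insert.mp hm with rfl | hmF
    · exact ⟨shift_false hx₁ hd₂ hL₁L₂ t, hy₂ t⟩
    · exact ⟨shift_false (fun t' => (hk t' m hmF).1) hdk hLL₂ t,
        shift_false (fun t' => (hk t' m hmF).2) hdk hLL₂ t⟩

/-- If `CoprimeExt` holds then the window has empty interior. -/
lemma interior_window_empty {B : Set ℕ+} (hP : CoprimeExt B) : interior (window B) = ∅ := by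
  rw [Set.eq_empty_iff_forall_notMem]
  intro h hh
  obtain ⟨U, hUsub, hUopen, hhU⟩ := mem_interior.mp hh
  obtain ⟨V, hVopen, hVU⟩ := isOpen_induced_iff.mp hUopen
  have hhV : (h : Gspace B) ∈ V := by rw [← hVU] at hhU; exact hhU
  obtain ⟨I, u, hu, hpi⟩ := isOpen_pi_iff.mp hVopen _ hhV
  obtain ⟨n, hn⟩ := exists_delta_mem h I
  set S : Finset ℕ+ := I.image (fun i : ↥B => i.1) with hSdef
  have hSB : ↑S ⊆ B := by
    intro b hb
    simp only [hSdef, Finset.coe_image, Set.mem_image, Finset.mem_coe] at hb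
    obtain ⟨i, _, rfl⟩ := hb
    exact i.2
  obtain ⟨c, hcB, hcop⟩ := hP S hSB
  have hco : IsCoprime (((c : ℕ+) : ℕ) : ℤ) ((lcmS S : ℕ) : ℤ) := by
    rw [Int.isCoprime_iff_gcd_eq_one, Int.gcd_natCast_natCast]; exact hcop
  obtain ⟨uu, vv, huv⟩ := hco
  set m : ℤ := n * uu * (((c : ℕ+) : ℕ) : ℤ) with hmdef
  have hcm : (((c : ℕ+) : ℕ) : ℤ) ∣ m := ⟨n * uu, by rw [hmdef]; ring⟩
  have hLm : ((lcmS S : ℕ) : ℤ) ∣ m - n := ⟨-(n * vv), by rw [hmdef]; linear_combination n * huv⟩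
  have hmem : delta B m ∈ (↑I : Set ↥B).pi u := by
    intro i hi
    have hiS : (i : ℕ+) ∈ S := Finset.mem_image_of_mem _ hi
    have hieq : delta B m i = delta B n i := by
      show ((m : ℤ) : ZMod (((i : ℕ+) : ℕ+) : ℕ)) = ((n : ℤ) : ZMod _)
      rw [ZMod.intCast_eq_intCast_iff]
      apply Int.modEq_iff_dvd.mpr
      have hiL : (((i : ℕ+) : ℕ) : ℤ) ∣ m - n :=
        (Int.natCast_dvd_natCast.mpr (dvd_lcmS hiS)).trans hLm
      have he : n - m = -(m - n) := by ring
      rw [he]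
      exact hiL.neg_right
    rw [hieq, hn i hi]
    exact (hu i hi).2
  have hmU : deltaH B m ∈ U := by
    rw [← hVU]
    exact hpi hmem
  have hw := hUsub hmU ⟨c, hcB⟩
  apply hw
  show ((m : ℤ) : ZMod ((c : ℕ+) : ℕ)) = 0
  exact (ZMod.intCast_zmod_eq_zero_iff_dvd m _).mpr hcm

/-- If the window has empty interior then `CoprimeExt` holds. -/
lemma coprimeExt_of_interior_empty {B : Set ℕ+} (h : interior (window B) = ∅) :
    CoprimeExt B := by
  by_contra hP
  unfold CoprimeExt at hP
  push_neg at hP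
  obtain ⟨S, hSB, hc⟩ := hP
  set F : Finset ↥B := S.attach.image (fun b => (⟨b.1, hSB b.2⟩ : ↥B)) with hFdef
  have hF : ∀ i : ↥B, i ∈ F ↔ (i : ℕ+) ∈ S := by
    intro i
    constructor
    · intro hi
      obtain ⟨b, -, rfl⟩ := Finset.mem_image.mp hi
      exact b.2
    · intro hi
      exact Finset.mem_image.mpr ⟨⟨(i : ℕ+), hi⟩, Finset.mem_attach _ _, Subtype.ext rfl⟩
  set U : Set (Hspace B) :=
    {h' | ∀ i ∈ F, (h' : Gspace B) i = ((1 : ℤ) : ZMod (((i : ↥B) : ℕ+) : ℕ))} with hUdef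
  have hUopen : IsOpen U := by
    have he : U = (fun h' : Hspace B => (h' : Gspace B)) ⁻¹'
        (⋂ i ∈ F, {g : Gspace B | g i = ((1 : ℤ) : ZMod (((i : ↥B) : ℕ+) : ℕ))}) := by
      ext h'; simp [hUdef]
    rw [he]
    exact IsOpen.preimage continuous_subtype_val
      (isOpen_biInter_finset fun i _ => by
        have he2 : {g : Gspace B | g i = ((1 : ℤ) : ZMod (((i : ↥B) : ℕ+) : ℕ))}
            = (fun g : Gspace B => g i) ⁻¹' {((1 : ℤ) : ZMod (((i : ↥B) : ℕ+) : ℕ))} := rfl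
        rw [he2]
        exact IsOpen.preimage (continuous_apply i) (isOpen_discrete _))
  have h1U : deltaH B 1 ∈ U := fun i _ => rfl
  have hUW : U ⊆ window B := by
    intro h' hh' b0
    by_contra h0
    obtain ⟨n, hn⟩ := exists_delta_mem h' (insert b0 F)
    have hnc : ((b0 : ℕ+) : ℤ) ∣ n := by
      have hb0 := hn b0 (Finset.mem_insert_self _ _)
      rw [h0] at hb0
      exact (ZMod.intCast_zmod_eq_zero_iff_dvd n _).mp hb0
    have hnL : ((lcmS S : ℕ) : ℤ) ∣ n - 1 := by
      have hball : ∀ b ∈ S, (b : ℕ) ∣ (n - 1).natAbs := by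
        intro b hb
        have hiF : (⟨b, hSB hb⟩ : ↥B) ∈ F := (hF _).mpr hb
        have h1 := hn _ (Finset.mem_insert_of_mem hiF)
        have h2 := hh' _ hiF
        have h3 : ((n : ℤ) : ZMod ((b : ℕ+) : ℕ)) = ((1 : ℤ) : ZMod ((b : ℕ+) : ℕ)) :=
          h1.trans h2
        have hd : (((b : ℕ+) : ℕ) : ℤ) ∣ n - 1 :=
          Int.modEq_iff_dvd.mp (((ZMod.intCast_eq_intCast_iff _ _ _).mp h3).symm)
        simpa using Int.natAbs_dvd_natAbs.mpr hd
      have hlcm : lcmS S ∣ (n - 1).natAbs := Finset.lcm_dvd hball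
      exact Int.dvd_natAbs.mp (Int.natCast_dvd_natCast.mpr hlcm)
    exact hc (b0 : ℕ+) b0.2 (gcd_eq_one_aux hnc hnL)
  have hmem : deltaH B 1 ∈ interior (window B) := mem_interior.mpr ⟨U, hUW, hUopen, h1U⟩
  rw [h] at hmem
  exact hmem

/-- From the proximality statement, derive `CoprimeExt`. -/
lemma coprimeExt_of_proximal {B : Set ℕ+} (hB : B.Infinite)
    (hprox : ∀ x ∈ Xeta B, ∀ y ∈ Xeta B, ∀ N : ℕ, ∃ k : ℤ,
      ∀ m : ℤ, |m| ≤ (N : ℤ) → shift k x m = shift k y m) :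
    CoprimeExt B := by
  intro S hSB
  by_contra hc
  push_neg at hc
  obtain ⟨c₀, hc₀B⟩ := hB.nonempty
  have hSne : S.Nonempty := by
    rcases Finset.eq_empty_or_nonempty S with rfl | hne
    · exact absurd (show Nat.gcd ((c₀ : ℕ+) : ℕ) (lcmS ∅) = 1 by simp [lcmS])
        (hc c₀ hc₀B)
    · exact hne
  set L : ℕ := lcmS S with hLdef
  have hLpos : 0 < L := Nat.pos_of_ne_zero (lcmS_ne_zero S)
  -- η is 1 on 1 + Lℤ
  have hone : ∀ n : ℤ, (L : ℤ) ∣ n - 1 → eta B n = true := by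
    intro n hd
    rw [eta_eq_true_iff]
    intro b hb hbn
    exact hc b hb (gcd_eq_one_aux hbn hd)
  -- η is 0 on Lℤ
  have hzero : ∀ n : ℤ, (L : ℤ) ∣ n → eta B n = false := by
    intro n hd
    obtain ⟨b, hbS⟩ := hSne
    rw [eta_eq_false_iff]
    intro hfree
    exact hfree b (hSB hbS) ((Int.natCast_dvd_natCast.mpr (dvd_lcmS hbS)).trans hd)
  have hxX : eta B ∈ Xeta B := subset_closure ⟨0, by funext n; simp [shift]⟩
  have hyX : shift 1 (eta B) ∈ Xeta B := subset_closure ⟨1, rfl⟩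
  obtain ⟨k, hk⟩ := hprox (eta B) hxX (shift 1 (eta B)) hyX L
  set m : ℤ := -(k % (L : ℤ)) with hmdef
  have hLne : (L : ℤ) ≠ 0 := by exact_mod_cast hLpos.ne'
  have hm1 : 0 ≤ k % (L : ℤ) := Int.emod_nonneg k hLne
  have hm2 : k % (L : ℤ) < (L : ℤ) := Int.emod_lt_of_pos k (by exact_mod_cast hLpos)
  have habs : |m| ≤ (L : ℤ) := by
    rw [hmdef, abs_neg, abs_of_nonneg hm1]
    exact hm2.le
  have hdvd : (L : ℤ) ∣ m + k := by
    refine ⟨k / (L : ℤ), ?_⟩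
    have := Int.mul_ediv_add_emod k (L : ℤ)
    rw [hmdef]; linarith
  have heq := hk m habs
  have hx0 : shift k (eta B) m = false := hzero (m + k) hdvd
  have hy1 : shift k (shift 1 (eta B)) m = true := by
    show eta B (m + k + 1) = true
    exact hone _ (by simpa using hdvd)
  rw [hx0, hy1] at heq
  exact Bool.false_ne_true heq

/-- For an infinite set `B` of positive integers, `int(W) = ∅` iff the subshift
`(X_η, σ)` is proximal: for all `x, y ∈ X_η` and every `ε > 0` (equivalently, every finite
window `[-N, N]` for the standard compatible metric on `{0,1}^ℤ`) there is `k ∈ ℤ` such that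
`σᵏx` and `σᵏy` agree on `[-N, N]`. -/
theorem statement8 (B : Set ℕ+) (hB : B.Infinite) :
    interior (window B) = ∅ ↔
      ∀ x ∈ Xeta B, ∀ y ∈ Xeta B, ∀ N : ℕ, ∃ k : ℤ,
        ∀ m : ℤ, |m| ≤ (N : ℤ) → shift k x m = shift k y m := by
  constructor
  · intro hint x hx y hy N
    have hP := coprimeExt_of_interior_empty hint
    obtain ⟨k, hk⟩ := key_annihilate hP hx hy N
    refine ⟨k, fun m hm => ?_⟩
    show x (m + k) = y (m + k)
    rw [(hk m hm).1, (hk m hm).2]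
  · intro hprox
    exact interior_window_empty (coprimeExt_of_proximal hB hprox)

end BFree
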